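/- arXiv:2202.06249 — 5 statements merged into one kernel-verified Lean document; each statement's English description precedes it below -/
import Mathlib

section
/- Let k ≥ 3 and ℓ ≥ 2 both be odd, and set t = (k+ℓ-2)/2. In the graph H(n,p,t+1) = K_t ∨ T_p(n-t), any subgraph isomorphic to the edge blow-up C_{k,ℓ}^{p+1} would require k+ℓ cliques of order p+1 each containing a vertex of the K_t part, but at most 2(t-1)+3 = k+ℓ-1 such cliques can be found (since in C_{k,ℓ}^{p+1} only three of the (p+1)-cliques share a common vertex and all other pairs share at most one vertex). Hence H(n,p,t+1) is C_{k,ℓ}^{p+1}-free. -/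
open SimpleGraph

/-- The lollipop `C_{k,ℓ}`: a cycle on vertices `0,…,k-1` together with a pendant
path `0, k, k+1, …, k+ℓ-1` appended to the cycle vertex `0` (the *center*). -/
def lollipop (k l : ℕ) : SimpleGraph (Fin (k + l)) :=
  SimpleGraph.fromRel (fun a b =>
    (b.val = a.val + 1 ∧ b.val < k) ∨ (a.val = 0 ∧ b.val = k - 1) ∨
    (a.val = 0 ∧ b.val = k) ∨ (b.val = a.val + 1 ∧ k ≤ a.val))

/-- The edge blow-up `H^{p+1}` of a graph `H`: each edge of `H` is replaced by a
clique of order `p+1`, the `p-1` new vertices of the cliques being all distinct. -/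
def edgeBlowup {V : Type*} (H : SimpleGraph V) (p : ℕ) :
    SimpleGraph (V ⊕ (H.edgeSet × Fin (p - 1))) where
  Adj x y := match x, y with
    | .inl a, .inl b => H.Adj a b
    | .inl a, .inr e => a ∈ (e.1 : Sym2 V)
    | .inr e, .inl a => a ∈ (e.1 : Sym2 V)
    | .inr e, .inr f => e.1 = f.1 ∧ e.2 ≠ f.2
  symm := ⟨by rintro (a | e) (b | f) h <;> simp_all <;> tauto⟩
  loopless := ⟨by rintro (a | e) h <;> simp_all⟩

/-- `A` is contained in `B` as a subgraph (there is an injective graph homomorphism). -/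
def IsCont {α β : Type*} (A : SimpleGraph α) (B : SimpleGraph β) : Prop :=
  ∃ f : α → β, Function.Injective f ∧ ∀ ⦃a b⦄, A.Adj a b → B.Adj (f a) (f b)

/-- The join `G ∨ H` of two graphs: all edges between the two graphs are added. -/
def gJoin {α β : Type*} (G : SimpleGraph α) (H : SimpleGraph β) : SimpleGraph (α ⊕ β) where
  Adj x y := match x, y with
    | .inl a, .inl b => G.Adj a b
    | .inr a, .inr b => H.Adj a b
    | .inl _, .inr _ => True
    | .inr _, .inl _ => True
  symm := ⟨by rintro (a | a) (b | b) h <;> first | exact h.symm | trivial⟩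
  loopless := ⟨by rintro (a | a) h <;> first | exact G.loopless.irrefl _ h | exact H.loopless.irrefl _ h⟩

/-- The disjoint union of two graphs. -/
def dUnion {α β : Type*} (G : SimpleGraph α) (H : SimpleGraph β) : SimpleGraph (α ⊕ β) where
  Adj x y := match x, y with
    | .inl a, .inl b => G.Adj a b
    | .inr a, .inr b => H.Adj a b
    | _, _ => False
  symm := ⟨by rintro (a | a) (b | b) h <;> first | exact h.symm | exact h⟩
  loopless := ⟨by rintro (a | a) h <;> first | exact G.loopless.irrefl _ h | exact H.loopless.irrefl _ h⟩

/-- `a` vertex-disjoint copies of the graph `G`. -/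
def copies {β : Type*} (a : ℕ) (G : SimpleGraph β) : SimpleGraph (Fin a × β) where
  Adj x y := x.1 = y.1 ∧ G.Adj x.2 y.2
  symm := ⟨by rintro x y ⟨h1, h2⟩; exact ⟨h1.symm, h2.symm⟩⟩
  loopless := ⟨by rintro x ⟨h1, h2⟩; exact G.loopless.irrefl _ h2⟩

/-- The complete multipartite graph `K_{p}(m,…,m)` with `p` parts of size `m`. -/
def completeMultipartite (p m : ℕ) : SimpleGraph (Fin p × Fin m) where
  Adj x y := x.1 ≠ y.1
  symm := ⟨fun _ _ h => h.symm⟩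

/-- `H(n,p,q) = K_{q-1} ∨ T_p(n-q+1)`. -/
def Hgraph (n p q : ℕ) : SimpleGraph (Fin (q - 1) ⊕ Fin (n - (q - 1))) :=
  gJoin (completeGraph (Fin (q - 1))) (turanGraph (n - (q - 1)) p)

/-- The number of edges of a graph. -/
noncomputable def numEdges {α : Type*} (G : SimpleGraph α) : ℕ := Nat.card G.edgeSet

/-- `E` (a graph on `n` vertices) is the unique extremal `H`-free graph on `n`
vertices: it is `H`-free, every `H`-free graph on `n` vertices has at most as many
edges, and any `H`-free graph attaining this maximum is isomorphic to `E`. -/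
def UniqueExtremal {W α : Type*} (H : SimpleGraph W) (n : ℕ) (E : SimpleGraph α) : Prop :=
  ¬ IsCont H E ∧ Nat.card α = n ∧
    ∀ G : SimpleGraph (Fin n), ¬ IsCont H G →
      numEdges G ≤ numEdges E ∧ (numEdges G = numEdges E → Nonempty (G ≃g E))

/-- The member of the family `𝒴_{k+1,ℓ+1}` obtained from the path `P_{k+1}`
(on `Fin (k+1)`) by appending a path `P_{ℓ+1}` to its vertex `j` (the branching
vertex), the appended path having the `ℓ` extra vertices `Fin l`. -/
def Ygraph (k l j : ℕ) : SimpleGraph (Fin (k + 1) ⊕ Fin l) :=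
  SimpleGraph.fromRel (fun x y => match x, y with
    | .inl a, .inl b => b.val = a.val + 1
    | .inl a, .inr b => a.val = j ∧ b.val = 0
    | .inr a, .inr b => b.val = a.val + 1
    | _, _ => False)

/-- The graph obtained from `H` by splitting every vertex of `U`: each `v ∈ U`
is replaced by `deg v` new vertices, one for each neighbor `w` of `v`, joined to
`w` only. -/
def splitGraph {V : Type*} (H : SimpleGraph V) (U : Set V) :
    SimpleGraph ({v : V // v ∉ U} ⊕ {p : V × V // p.1 ∈ U ∧ H.Adj p.1 p.2}) where
  Adj x y := match x, y with
    | .inl a, .inl b => H.Adj a.1 b.1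
    | .inl a, .inr e => e.1.2 = a.1
    | .inr e, .inl a => e.1.2 = a.1
    | .inr _, .inr _ => False
  symm := ⟨by rintro (a | e) (b | f) h <;> first | exact h.symm | exact h⟩
  loopless := ⟨by rintro (a | e) h <;> simp_all⟩

/-! ### Auxiliary material for `stmt3` -/

section Stmt3Aux

/-- Value of the first endpoint of the `i`-th edge of the lollipop. -/
def eA (k i : ℕ) : ℕ := if i < k - 1 then i else if i ≤ k then 0 else i - 1

/-- Value of the second endpoint of the `i`-th edge of the lollipop. -/
def eB (k i : ℕ) : ℕ := if i < k - 1 then i + 1 else if i = k - 1 then k - 1 else if i = k then k else i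

lemma eA_lt {k l i : ℕ} (hk : 3 ≤ k) (hl : 2 ≤ l) (hi : i < k + l) : eA k i < k + l := by
  unfold eA; split_ifs <;> omega

lemma eB_lt {k l i : ℕ} (hk : 3 ≤ k) (hl : 2 ≤ l) (hi : i < k + l) : eB k i < k + l := by
  unfold eB; split_ifs <;> omega

lemma lollipop_adj_e {k l : ℕ} (hk : 3 ≤ k) (hl : 2 ≤ l) (i : Fin (k + l)) :
    (lollipop k l).Adj ⟨eA k i.val, eA_lt hk hl i.isLt⟩ ⟨eB k i.val, eB_lt hk hl i.isLt⟩ := by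
  have hi := i.isLt
  simp only [lollipop, SimpleGraph.fromRel_adj, ne_eq, Fin.mk.injEq]
  unfold eA eB; split_ifs <;> omega

/-- `a` is an endpoint of the `i`-th edge of the lollipop. -/
def Qp (k i a : ℕ) : Prop :=
  (i < k - 1 ∧ (a = i ∨ a = i + 1)) ∨ (i = k - 1 ∧ (a = 0 ∨ a = k - 1)) ∨
  (i = k ∧ (a = 0 ∨ a = k)) ∨ (k < i ∧ (a = i - 1 ∨ a = i))

lemma endpoint_char {k l : ℕ} (hk : 3 ≤ k) (i a : Fin (k + l))
    (h : a.val = eA k i.val ∨ a.val = eB k i.val) : Qp k i.val a.val := by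
  have hi := i.isLt
  unfold eA eB at h; unfold Qp; split_ifs at h <;> omega

lemma e_inj {k l : ℕ} (hk : 3 ≤ k) (hl : 2 ≤ l) (i j : Fin (k + l))
    (h : (eA k i.val = eA k j.val ∧ eB k i.val = eB k j.val) ∨
      (eA k i.val = eB k j.val ∧ eB k i.val = eA k j.val)) : i = j := by
  have hi := i.isLt; have hj := j.isLt
  rw [Fin.ext_iff]; unfold eA eB at h; split_ifs at h <;> omega

lemma C3 {k i j m a : ℕ} (hk : 3 ≤ k) (h1 : Qp k i a) (h2 : Qp k j a) (h3 : Qp k m a)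
    (hij : i ≠ j) (him : i ≠ m) (hjm : j ≠ m) : i = k ∨ j = k ∨ m = k := by
  unfold Qp at *; omega

lemma C4 {k i j m o a : ℕ} (hk : 3 ≤ k) (h1 : Qp k i a) (h2 : Qp k j a) (h3 : Qp k m a)
    (h4 : Qp k o a) (hij : i ≠ j) (him : i ≠ m) (hio : i ≠ o) (hjm : j ≠ m) (hjo : j ≠ o)
    (hmo : m ≠ o) : False := by
  unfold Qp at *; omega

/-- The vertices of the `(p+1)`-clique of the blow-up corresponding to the edge `s(a,b)`. -/
def cvf {V : Type*} {H : SimpleGraph V} {p : ℕ} (hp : 2 ≤ p) {a b : V} (hab : H.Adj a b)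
    (j : Fin (p + 1)) : V ⊕ (H.edgeSet × Fin (p - 1)) :=
  if j.val = 0 then .inl a
  else if j.val = 1 then .inl b
  else .inr (⟨s(a, b), hab⟩, ⟨j.val - 2, by have := j.isLt; omega⟩)

lemma cvf_inj {V : Type*} {H : SimpleGraph V} {p : ℕ} (hp : 2 ≤ p) {a b : V} (hab : H.Adj a b) :
    Function.Injective (cvf hp hab) := by
  intro j1 j2 h
  have hne := hab.ne
  have h1 := j1.isLt; have h2 := j2.isLt
  unfold cvf at h
  rw [Fin.ext_iff]
  split_ifs at h <;> simp [Fin.ext_iff] at h <;> first | omega | exact absurd h hne | exact absurd h.symm hne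

lemma cvf_adj {V : Type*} {H : SimpleGraph V} {p : ℕ} (hp : 2 ≤ p) {a b : V} (hab : H.Adj a b)
    {j1 j2 : Fin (p + 1)} (hne : j1 ≠ j2) :
    (edgeBlowup H p).Adj (cvf hp hab j1) (cvf hp hab j2) := by
  have h1 := j1.isLt; have h2 := j2.isLt
  have hv : j1.val ≠ j2.val := fun h => hne (Fin.ext h)
  unfold cvf
  split_ifs <;>
    first
    | omega
    | exact hab
    | exact hab.symm
    | exact Sym2.mem_mk_left a b
    | exact Sym2.mem_mk_right a b
    | exact ⟨rfl, fun hc => by rw [Fin.ext_iff] at hc; simp at hc; omega⟩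

lemma lemB {k l p q r : ℕ} (hp : 2 ≤ p)
    (f : (Fin (k+l) ⊕ ((lollipop k l).edgeSet × Fin (p-1))) → (Fin q ⊕ Fin r))
    (hinj : Function.Injective f)
    (hom : ∀ ⦃x y⦄, (edgeBlowup (lollipop k l) p).Adj x y →
      (gJoin (completeGraph (Fin q)) (turanGraph r p)).Adj (f x) (f y))
    {a b : Fin (k+l)} (hab : (lollipop k l).Adj a b) :
    ∃ (w : Fin q) (x : Fin (k+l) ⊕ ((lollipop k l).edgeSet × Fin (p-1))),
      f x = Sum.inl w ∧
        (x = Sum.inl a ∨ x = Sum.inl b ∨ ∃ c, x = Sum.inr (⟨s(a,b), hab⟩, c)) := by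
  by_cases hall : ∀ j : Fin (p+1), ∃ u, f (cvf hp hab j) = Sum.inr u
  · exfalso
    choose u hu using hall
    have huinj : Function.Injective u := by
      intro j1 j2 h
      apply cvf_inj hp hab
      apply hinj
      rw [hu j1, hu j2, h]
    have hadj : ∀ j1 j2 : Fin (p+1), j1 ≠ j2 → (turanGraph r p).Adj (u j1) (u j2) := by
      intro j1 j2 hne
      have step := hom (cvf_adj hp hab hne)
      rw [hu j1, hu j2] at step
      exact step
    have hcf := SimpleGraph.turanGraph_cliqueFree (n := r) (r := p) (by omega)
    apply hcf (Finset.univ.image u)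
    constructor
    · intro x hx y hy hxy
      simp only [Finset.coe_image, Finset.coe_univ, Set.image_univ, Set.mem_range] at hx hy
      obtain ⟨j1, rfl⟩ := hx; obtain ⟨j2, rfl⟩ := hy
      exact hadj j1 j2 (fun h => hxy (by rw [h]))
    · rw [Finset.card_image_of_injective _ huinj, Finset.card_univ, Fintype.card_fin]
  · push_neg at hall
    obtain ⟨j, hj⟩ := hall
    cases hval : f (cvf hp hab j) with
    | inl w =>
      refine ⟨w, cvf hp hab j, hval, ?_⟩
      unfold cvf
      split_ifs
      · exact Or.inl rfl
      · exact Or.inr (Or.inl rfl)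
      · exact Or.inr (Or.inr ⟨_, rfl⟩)
    | inr u => exact absurd hval (hj u)

lemma four_distinct {α : Type*} [DecidableEq α] {s : Finset α} (h : 3 < s.card) :
    ∃ a ∈ s, ∃ b ∈ s, ∃ c ∈ s, ∃ d ∈ s,
      a ≠ b ∧ a ≠ c ∧ a ≠ d ∧ b ≠ c ∧ b ≠ d ∧ c ≠ d := by
  have hpos : 0 < s.card := by omega
  obtain ⟨a, ha⟩ := Finset.card_pos.mp hpos
  have h2 : 2 < (s.erase a).card := by rw [Finset.card_erase_of_mem ha]; omega
  obtain ⟨b, hb, c, hc, d, hd, hbc, hbd, hcd⟩ := Finset.two_lt_card.mp h2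
  exact ⟨a, ha, b, Finset.mem_of_mem_erase hb, c, Finset.mem_of_mem_erase hc,
    d, Finset.mem_of_mem_erase hd, (Finset.ne_of_mem_erase hb).symm,
    (Finset.ne_of_mem_erase hc).symm, (Finset.ne_of_mem_erase hd).symm, hbc, hbd, hcd⟩

end Stmt3Aux

/-- For `k ≥ 3` odd, `ℓ ≥ 2` odd, `p ≥ 2`, `t = (k+ℓ-2)/2` and `n`
sufficiently large, the graph `H(n,p,t+1) = K_t ∨ T_p(n-t)` is `C_{k,ℓ}^{p+1}`-free. -/
theorem stmt3 (k l p t : ℕ) (hk : 3 ≤ k) (hko : Odd k) (hl : 2 ≤ l) (hlo : Odd l)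
    (hp : 2 ≤ p) (ht : t = (k + l - 2) / 2) :
    ∃ N : ℕ, ∀ n ≥ N,
      ¬ IsCont (edgeBlowup (lollipop k l) p) (Hgraph n p (t + 1)) := by
  classical
  refine ⟨0, fun n _ => ?_⟩
  rintro ⟨f, hinj, hom⟩
  have hk2 : k % 2 = 1 := Nat.odd_iff.mp hko
  have hl2 : l % 2 = 1 := Nat.odd_iff.mp hlo
  have ht1 : 1 ≤ t := by omega
  have hB := fun i : Fin (k + l) =>
    lemB (q := t + 1 - 1) (r := n - (t + 1 - 1)) hp f hinj hom (lollipop_adj_e hk hl i)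
  choose w x hfx hcase using hB
  have hxeq : ∀ i j, w i = w j → x i = x j := by
    intro i j h
    exact hinj (by rw [hfx i, hfx j, h])
  have hQ : ∀ i a, x i = Sum.inl a → Qp k i.val a.val := by
    intro i a hxi
    rcases hcase i with h | h | ⟨c, h⟩
    · have ha : a = ⟨eA k i.val, eA_lt hk hl i.isLt⟩ := by
        rw [hxi] at h; exact Sum.inl.inj h
      exact endpoint_char hk i a (Or.inl (by rw [ha]))
    · have ha : a = ⟨eB k i.val, eB_lt hk hl i.isLt⟩ := by
        rw [hxi] at h; exact Sum.inl.inj h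
      exact endpoint_char hk i a (Or.inr (by rw [ha]))
    · rw [hxi] at h; simp at h
  have hnotboth : ∀ i j, i ≠ j → x i = x j → ∃ a, x i = Sum.inl a := by
    intro i j hne hxij
    rcases hcase i with h | h | ⟨c, h⟩
    · exact ⟨_, h⟩
    · exact ⟨_, h⟩
    · exfalso
      rcases hcase j with h' | h' | ⟨c', h'⟩
      · rw [h, h'] at hxij; simp at hxij
      · rw [h, h'] at hxij; simp at hxij
      · rw [h, h'] at hxij
        simp only [Sum.inr.injEq, Prod.mk.injEq, Subtype.mk.injEq] at hxij
        obtain ⟨hsym, -⟩ := hxij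
        replace hsym := Sym2.eq_iff.mp (congrArg Subtype.val hsym)
        apply hne
        apply e_inj hk hl i j
        rcases hsym with ⟨ha, hb⟩ | ⟨ha, hb⟩
        · exact Or.inl ⟨congrArg Fin.val ha, congrArg Fin.val hb⟩
        · exact Or.inr ⟨congrArg Fin.val ha, congrArg Fin.val hb⟩
  have hkkl : k < k + l := by omega
  set i0 : Fin (k + l) := ⟨k, hkkl⟩ with hi0
  have fib2 : ∀ ww, ww ≠ w i0 → (Finset.univ.filter (fun i => w i = ww)).card ≤ 2 := by
    intro ww hww
    by_contra hgt
    have hgt2 : 2 < (Finset.univ.filter (fun i => w i = ww)).card := by omega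
    obtain ⟨i, hi, j, hj, m, hm, hij, him, hjm⟩ := Finset.two_lt_card.mp hgt2
    simp only [Finset.mem_filter, Finset.mem_univ, true_and] at hi hj hm
    obtain ⟨a, hxa⟩ := hnotboth i j hij (hxeq i j (hi.trans hj.symm))
    have hxj : x j = Sum.inl a := (hxeq j i (hj.trans hi.symm)).trans hxa
    have hxm : x m = Sum.inl a := (hxeq m i (hm.trans hi.symm)).trans hxa
    have hc3 := C3 hk (hQ i a hxa) (hQ j a hxj) (hQ m a hxm)
      (fun h => hij (Fin.ext h)) (fun h => him (Fin.ext h)) (fun h => hjm (Fin.ext h))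
    apply hww
    rcases hc3 with h | h | h
    · rw [← hi]; congr 1; exact Fin.ext h
    · rw [← hj]; congr 1; exact Fin.ext h
    · rw [← hm]; congr 1; exact Fin.ext h
  have fib3 : (Finset.univ.filter (fun i => w i = w i0)).card ≤ 3 := by
    by_contra hgt
    obtain ⟨i, hi, j, hj, m, hm, o, ho, hij, him, hio, hjm, hjo, hmo⟩ :=
      four_distinct (show 3 < (Finset.univ.filter (fun i => w i = w i0)).card by omega)
    simp only [Finset.mem_filter, Finset.mem_univ, true_and] at hi hj hm ho
    obtain ⟨a, hxa⟩ := hnotboth i j hij (hxeq i j (hi.trans hj.symm))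
    have hxj : x j = Sum.inl a := (hxeq j i (hj.trans hi.symm)).trans hxa
    have hxm : x m = Sum.inl a := (hxeq m i (hm.trans hi.symm)).trans hxa
    have hxo : x o = Sum.inl a := (hxeq o i (ho.trans hi.symm)).trans hxa
    exact C4 hk (hQ i a hxa) (hQ j a hxj) (hQ m a hxm) (hQ o a hxo)
      (fun h => hij (Fin.ext h)) (fun h => him (Fin.ext h)) (fun h => hio (Fin.ext h))
      (fun h => hjm (Fin.ext h)) (fun h => hjo (Fin.ext h)) (fun h => hmo (Fin.ext h))
  have hsum := Finset.card_eq_sum_card_fiberwise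
    (f := w) (s := Finset.univ) (t := Finset.univ) (fun i _ => Finset.mem_univ (w i))
  rw [← Finset.add_sum_erase _ _ (Finset.mem_univ (w i0)), Finset.card_univ,
    Fintype.card_fin] at hsum
  have hbound : ∑ ww ∈ Finset.univ.erase (w i0),
      (Finset.univ.filter (fun i => w i = ww)).card ≤ (Finset.univ.erase (w i0)).card * 2 := by
    have := Finset.sum_le_card_nsmul (Finset.univ.erase (w i0))
      (fun ww => (Finset.univ.filter (fun i => w i = ww)).card) 2
      (fun ww hww => fib2 ww (Finset.ne_of_mem_erase hww))
    simpa [smul_eq_mul] using this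
  have hcard_t : (Finset.univ.erase (w i0)).card = t + 1 - 1 - 1 := by
    rw [Finset.card_erase_of_mem (Finset.mem_univ _), Finset.card_univ, Fintype.card_fin]
  omega
end

section
/- Let k ≥ 3 be odd and ℓ ≥ 2 be even, and set t = (k+ℓ-3)/2. Then H(n,p,t+2) = K_{t+1} ∨ T_p(n-t-1) contains no copy of C_{k,ℓ}^{p+1}, because a copy would force the K_{t+1} part to be a vertex cover of C_{k,ℓ}, whereas the minimum vertex cover of C_{k,ℓ} has size (k+ℓ+1)/2 > t+1. -/
open SimpleGraph

lemma edgeBlowup_adj_inl_inl {V : Type*} (H : SimpleGraph V) (p : ℕ) (a b : V) :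
    (edgeBlowup H p).Adj (Sum.inl a) (Sum.inl b) ↔ H.Adj a b := Iff.rfl

lemma edgeBlowup_adj_inl_inr {V : Type*} (H : SimpleGraph V) (p : ℕ) (a : V)
    (e : H.edgeSet × Fin (p - 1)) :
    (edgeBlowup H p).Adj (Sum.inl a) (Sum.inr e) ↔ a ∈ (e.1 : Sym2 V) := Iff.rfl

lemma edgeBlowup_adj_inr_inl {V : Type*} (H : SimpleGraph V) (p : ℕ) (a : V)
    (e : H.edgeSet × Fin (p - 1)) :
    (edgeBlowup H p).Adj (Sum.inr e) (Sum.inl a) ↔ a ∈ (e.1 : Sym2 V) := Iff.rfl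

lemma edgeBlowup_adj_inr_inr {V : Type*} (H : SimpleGraph V) (p : ℕ)
    (e f : H.edgeSet × Fin (p - 1)) :
    (edgeBlowup H p).Adj (Sum.inr e) (Sum.inr f) ↔ e.1 = f.1 ∧ e.2 ≠ f.2 := Iff.rfl

lemma Hgraph_adj_inr_inr (n p q : ℕ) (x y : Fin (n - (q - 1))) :
    (Hgraph n p q).Adj (Sum.inr x) (Sum.inr y) ↔ (turanGraph (n - (q - 1)) p).Adj x y := Iff.rfl

open Finset in
lemma cover_bound (k l : ℕ) (hk : 3 ≤ k) (hko : Odd k) (hl : 2 ≤ l) (hle : Even l)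
    (S : Finset (Fin (k + l)))
    (hS : ∀ a b : Fin (k + l), (lollipop k l).Adj a b → a ∈ S ∨ b ∈ S) :
    k + l + 1 ≤ 2 * S.card := by
  classical
  have hkl : 0 < k + l := by omega
  set V : ℕ → Fin (k + l) := fun m => ⟨m % (k + l), Nat.mod_lt _ hkl⟩ with hV
  have hVval : ∀ m, m < k + l → (V m).val = m := fun m hm => Nat.mod_eq_of_lt hm
  set T : Finset (Fin (k + l)) := S.filter (fun v => v.val < k) with hT
  set U : Finset (Fin (k + l)) := S.filter (fun v => ¬ v.val < k) with hU
  have hTU : T.card + U.card = S.card := card_filter_add_card_filter_not _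
  -- the cycle part
  set g : ℕ → Fin (k + l) := fun i => if V i ∈ S then V i else V ((i + 1) % k) with hg
  have hgood : ∀ i ∈ Finset.range k, g i ∈ T ∧ ((g i).val = i ∨ (g i).val = (i + 1) % k) := by
    intro i hi
    rw [Finset.mem_range] at hi
    by_cases h : V i ∈ S
    · have : g i = V i := if_pos h
      rw [this]
      refine ⟨Finset.mem_filter.2 ⟨h, ?_⟩, Or.inl (hVval i (by omega))⟩
      rw [hVval i (by omega)]; exact hi
    · have hnextlt : (i + 1) % k < k := Nat.mod_lt _ (by omega)
      have hgi : g i = V ((i + 1) % k) := if_neg h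
      have hadj : (lollipop k l).Adj (V i) (V ((i + 1) % k)) := by
        rcases Nat.lt_or_ge (i + 1) k with hlt | hge
        · have h1 : (i + 1) % k = i + 1 := Nat.mod_eq_of_lt hlt
          refine ⟨?_, Or.inl ?_⟩
          · intro hc
            have := congrArg Fin.val hc
            rw [hVval i (by omega), hVval _ (by omega), h1] at this
            omega
          · left
            rw [hVval i (by omega), hVval _ (by omega), h1]
            exact ⟨rfl, hlt⟩
        · have hik : i = k - 1 := by omega
          have h1 : (i + 1) % k = 0 := by
            have : i + 1 = k := by omega
            rw [this, Nat.mod_self]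
          refine ⟨?_, Or.inr ?_⟩
          · intro hc
            have := congrArg Fin.val hc
            rw [hVval i (by omega), hVval _ (by omega), h1] at this
            omega
          · right; left
            rw [hVval i (by omega), hVval _ (by omega), h1]
            exact ⟨rfl, hik⟩
      rcases hS _ _ hadj with h1 | h1
      · exact absurd h1 h
      · rw [hgi]
        refine ⟨Finset.mem_filter.2 ⟨h1, ?_⟩, Or.inr (hVval _ (by omega))⟩
        rw [hVval _ (by omega)]; exact hnextlt
  have hmaps : ∀ i ∈ Finset.range k, g i ∈ T := fun i hi => (hgood i hi).1
  have hcyc : k ≤ 2 * T.card := by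
    have := Finset.card_le_mul_card_image_of_maps_to hmaps 2 ?_
    · simpa using this
    · intro b hb
      have hsub : {a ∈ Finset.range k | g a = b} ⊆ {b.val, (b.val + (k - 1)) % k} := by
        intro i hi
        rw [Finset.mem_filter, Finset.mem_range] at hi
        obtain ⟨hik, hgib⟩ := hi
        rcases (hgood i (Finset.mem_range.2 hik)).2 with h1 | h1
        · rw [hgib] at h1
          simp [← h1]
        · rw [hgib] at h1
          rw [Finset.mem_insert, Finset.mem_singleton]
          right
          rcases Nat.lt_or_ge (i + 1) k with hlt | hge
          · have h2 : (i + 1) % k = i + 1 := Nat.mod_eq_of_lt hlt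
            rw [h1, h2]
            have : i + 1 + (k - 1) = i + k := by omega
            rw [this, Nat.add_mod_right, Nat.mod_eq_of_lt hik]
          · have hik1 : i + 1 = k := by omega
            have h2 : (i + 1) % k = 0 := by rw [hik1, Nat.mod_self]
            rw [h1, h2, Nat.zero_add, Nat.mod_eq_of_lt (by omega)]
            omega
      calc {a ∈ Finset.range k | g a = b}.card ≤ ({b.val, (b.val + (k - 1)) % k} : Finset ℕ).card :=
            Finset.card_le_card hsub
        _ ≤ 2 := Finset.card_insert_le _ _ |>.trans (by simp)
  -- the path part
  obtain ⟨b, hb⟩ := hle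
  have hbl : l = 2 * b := by omega
  set h : ℕ → Fin (k + l) := fun j => if V (k + 2 * j) ∈ S then V (k + 2 * j) else V (k + 2 * j + 1)
    with hh
  have hhgood : ∀ j ∈ Finset.range b, h j ∈ U ∧
      ((h j).val = k + 2 * j ∨ (h j).val = k + 2 * j + 1) := by
    intro j hj
    rw [Finset.mem_range] at hj
    have hlt1 : k + 2 * j < k + l := by omega
    have hlt2 : k + 2 * j + 1 < k + l := by omega
    by_cases hc : V (k + 2 * j) ∈ S
    · have : h j = V (k + 2 * j) := if_pos hc
      rw [this]
      exact ⟨Finset.mem_filter.2 ⟨hc, by rw [hVval _ hlt1]; omega⟩, Or.inl (hVval _ hlt1)⟩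
    · have hadj : (lollipop k l).Adj (V (k + 2 * j)) (V (k + 2 * j + 1)) := by
        refine ⟨?_, Or.inl ?_⟩
        · intro hc2
          have := congrArg Fin.val hc2
          rw [hVval _ hlt1, hVval _ hlt2] at this
          omega
        · right; right; right
          rw [hVval _ hlt1, hVval _ hlt2]
          exact ⟨rfl, by omega⟩
      rcases hS _ _ hadj with h1 | h1
      · exact absurd h1 hc
      · have : h j = V (k + 2 * j + 1) := if_neg hc
        rw [this]
        exact ⟨Finset.mem_filter.2 ⟨h1, by rw [hVval _ hlt2]; omega⟩, Or.inr (hVval _ hlt2)⟩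
  have hpath : b ≤ U.card := by
    have := Finset.card_le_card_of_injOn h (fun j hj => (hhgood j hj).1) ?_
    · simpa using this
    intro j1 hj1 j2 hj2 heq
    simp only [Finset.coe_sort_coe, Finset.mem_coe] at hj1 hj2
    rcases (hhgood j1 hj1).2 with h1 | h1 <;> rcases (hhgood j2 hj2).2 with h2 | h2 <;>
      rw [heq] at h1 <;> omega
  -- parity
  obtain ⟨m, hm⟩ := hko
  omega


/-- For `k ≥ 3` odd, `ℓ ≥ 2` even, `p ≥ 2`, `t = (k+ℓ-3)/2` and `n`
sufficiently large, `H(n,p,t+2) = K_{t+1} ∨ T_p(n-t-1)` contains no copy of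
`C_{k,ℓ}^{p+1}`, and indeed the minimum vertex cover of `C_{k,ℓ}` has size
`(k+ℓ+1)/2 > t+1`. -/
theorem stmt4 (k l p t : ℕ) (hk : 3 ≤ k) (hko : Odd k) (hl : 2 ≤ l) (hle : Even l)
    (hp : 2 ≤ p) (ht : t = (k + l - 3) / 2) :
    (∃ N : ℕ, ∀ n ≥ N,
      ¬ IsCont (edgeBlowup (lollipop k l) p) (Hgraph n p (t + 2))) ∧
    (∀ S : Finset (Fin (k + l)),
      (∀ a b : Fin (k + l), (lollipop k l).Adj a b → a ∈ S ∨ b ∈ S) →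
        t + 1 < S.card) := by
  have part2 : ∀ S : Finset (Fin (k + l)),
      (∀ a b : Fin (k + l), (lollipop k l).Adj a b → a ∈ S ∨ b ∈ S) →
        t + 1 < S.card := by
    intro S hS
    have := cover_bound k l hk hko hl hle S hS
    omega
  refine ⟨⟨0, fun n _ => ?_⟩, part2⟩
  rintro ⟨f, finj, fadj⟩
  classical
  -- Step A: every edge's blow-up clique has a vertex mapped to the left part
  have key : ∀ a b (hab : (lollipop k l).Adj a b),
      (f (Sum.inl a)).isLeft = true ∨ (f (Sum.inl b)).isLeft = true ∨
      ∃ i : Fin (p - 1),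
        (f (Sum.inr (⟨s(a, b), (lollipop k l).mem_edgeSet.mpr hab⟩, i))).isLeft = true := by
    intro a b hab
    by_contra hcon
    push_neg at hcon
    obtain ⟨h1, h2, h3⟩ := hcon
    set e0 : (lollipop k l).edgeSet := ⟨s(a, b), (lollipop k l).mem_edgeSet.mpr hab⟩ with he0
    set q : Fin 2 ⊕ Fin (p - 1) → Fin (k + l) ⊕ ((lollipop k l).edgeSet × Fin (p - 1)) :=
      Sum.elim ![Sum.inl a, Sum.inl b] (fun i => Sum.inr (e0, i)) with hq
    have hadjq : ∀ x y, x ≠ y → (edgeBlowup (lollipop k l) p).Adj (q x) (q y) := by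
      rintro (x | x) (y | y) hxy
      · fin_cases x <;> fin_cases y <;>
          simp only [hq, Sum.elim_inl, Matrix.cons_val_zero, Matrix.cons_val_one,
            Matrix.head_cons, edgeBlowup_adj_inl_inl] <;>
          first
            | exact absurd rfl hxy
            | exact hab
            | exact hab.symm
      · fin_cases x <;>
          simp only [hq, Sum.elim_inl, Sum.elim_inr, Matrix.cons_val_zero, Matrix.cons_val_one,
            Matrix.head_cons, edgeBlowup_adj_inl_inr] <;>
          first
            | exact Sym2.mem_mk_left a b
            | exact Sym2.mem_mk_right a b
      · fin_cases y <;>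
          simp only [hq, Sum.elim_inl, Sum.elim_inr, Matrix.cons_val_zero, Matrix.cons_val_one,
            Matrix.head_cons, edgeBlowup_adj_inr_inl] <;>
          first
            | exact Sym2.mem_mk_left a b
            | exact Sym2.mem_mk_right a b
      · simp only [hq, Sum.elim_inr, edgeBlowup_adj_inr_inr]
        refine ⟨?_, fun hc => hxy (by rw [hc])⟩
        trivial
    have hr : ∀ x : Fin 2 ⊕ Fin (p - 1), ∃ y, f (q x) = Sum.inr y := by
      intro x
      have hleft : ¬ (f (q x)).isLeft = true := by
        rcases x with x | x
        · fin_cases x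
          · simpa [hq] using h1
          · simpa [hq] using h2
        · simpa [hq] using h3 x
      cases hfq : f (q x) with
      | inl y => exact absurd (by rw [hfq]; rfl) hleft
      | inr y => exact ⟨y, rfl⟩
    choose r hrr using hr
    have hF : Function.Injective
        (fun x : Fin 2 ⊕ Fin (p - 1) => (⟨(r x).val % p, Nat.mod_lt _ (by omega)⟩ : Fin p)) := by
      intro x y hxy
      by_contra hne
      have hadj := fadj (hadjq x y hne)
      rw [hrr x, hrr y] at hadj
      rw [Hgraph_adj_inr_inr] at hadj
      simp only [turanGraph] at hadj
      exact hadj (by simpa using congrArg Fin.val hxy)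
    have := Fintype.card_le_of_injective _ hF
    simp only [Fintype.card_sum, Fintype.card_fin] at this
    omega
  -- the set of lollipop vertices mapped to the left part
  set S0 : Finset (Fin (k + l)) :=
    Finset.univ.filter (fun v => (f (Sum.inl v)).isLeft = true) with hS0
  -- the edges not covered by S0
  set Unc : Finset (Sym2 (Fin (k + l))) :=
    (lollipop k l).edgeFinset.filter (fun e => ∀ v ∈ e, v ∉ S0) with hUncDef
  have hUnc : ∀ e ∈ Unc, ∃ z : (lollipop k l).edgeSet × Fin (p - 1),
      z.1.1 = e ∧ (f (Sum.inr z)).isLeft = true := by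
    intro e
    induction e using Sym2.ind with
    | _ a b =>
      intro he
      rw [hUncDef, Finset.mem_filter, SimpleGraph.mem_edgeFinset,
        SimpleGraph.mem_edgeSet] at he
      obtain ⟨hab, hnc⟩ := he
      rcases key a b hab with h | h | ⟨i, hi⟩
      · exact absurd (by rw [hS0, Finset.mem_filter]; exact ⟨Finset.mem_univ _, h⟩ : a ∈ S0)
          (hnc a (Sym2.mem_mk_left a b))
      · exact absurd (by rw [hS0, Finset.mem_filter]; exact ⟨Finset.mem_univ _, h⟩ : b ∈ S0)
          (hnc b (Sym2.mem_mk_right a b))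
      · exact ⟨(⟨s(a, b), (lollipop k l).mem_edgeSet.mpr hab⟩, i), rfl, hi⟩
  have hUnc' : ∀ e : {x // x ∈ Unc}, ∃ z : (lollipop k l).edgeSet × Fin (p - 1),
      z.1.1 = e.1 ∧ (f (Sum.inr z)).isLeft = true := fun e => hUnc e.1 e.2
  choose z hz1 hz2 using hUnc'
  have hzinj : Function.Injective z := by
    intro e e' hzz
    apply Subtype.ext
    rw [← hz1 e, ← hz1 e', hzz]
  set A : Finset (Fin (t + 2 - 1) ⊕ Fin (n - (t + 2 - 1))) :=
    S0.image (fun v => f (Sum.inl v)) with hA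
  set B : Finset (Fin (t + 2 - 1) ⊕ Fin (n - (t + 2 - 1))) :=
    Unc.attach.image (fun e => f (Sum.inr (z e))) with hB
  have hAcard : A.card = S0.card :=
    Finset.card_image_of_injective _ (finj.comp Sum.inl_injective)
  have hBcard : B.card = Unc.card := by
    have hinj : Function.Injective (fun e : {x // x ∈ Unc} => f (Sum.inr (z e))) :=
      fun e e' h => hzinj (Sum.inr_injective (finj h))
    rw [hB, Finset.card_image_of_injective _ hinj, Finset.card_attach]
  set L : Finset (Fin (t + 2 - 1) ⊕ Fin (n - (t + 2 - 1))) :=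
    Finset.univ.filter (fun x => x.isLeft = true) with hL
  have hLcard : L.card = t + 1 := by
    have hLim : L = Finset.univ.image (Sum.inl : Fin (t + 2 - 1) → _) := by
      ext x
      cases x <;> simp [hL]
    rw [hLim, Finset.card_image_of_injective _ Sum.inl_injective, Finset.card_univ]
    simp
  have hAL : A ⊆ L := by
    intro x hx
    rw [hA, Finset.mem_image] at hx
    obtain ⟨v, hv, hvx⟩ := hx
    rw [hS0, Finset.mem_filter] at hv
    rw [hL, Finset.mem_filter]
    exact ⟨Finset.mem_univ _, hvx ▸ hv.2⟩
  have hBL : B ⊆ L := by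
    intro x hx
    rw [hB, Finset.mem_image] at hx
    obtain ⟨e, _, hex⟩ := hx
    rw [hL, Finset.mem_filter]
    exact ⟨Finset.mem_univ _, hex ▸ hz2 e⟩
  have hdisj : Disjoint A B := by
    rw [Finset.disjoint_left]
    intro x hx hxB
    rw [hA, Finset.mem_image] at hx
    rw [hB, Finset.mem_image] at hxB
    obtain ⟨v, _, hvx⟩ := hx
    obtain ⟨e, _, hex⟩ := hxB
    have := finj (hvx.trans hex.symm)
    simp at this
  have hcount : S0.card + Unc.card ≤ t + 1 := by
    rw [← hAcard, ← hBcard, ← Finset.card_union_of_disjoint hdisj]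
    exact (Finset.card_le_card (Finset.union_subset hAL hBL)).trans hLcard.le
  -- build a vertex cover of size ≤ t + 1
  set C : Finset (Fin (k + l)) := S0 ∪ Unc.image (fun e => e.out.1) with hC
  have hCcover : ∀ a b : Fin (k + l), (lollipop k l).Adj a b → a ∈ C ∨ b ∈ C := by
    intro a b hab
    by_cases ha : a ∈ S0
    · exact Or.inl (Finset.mem_union_left _ ha)
    by_cases hb : b ∈ S0
    · exact Or.inr (Finset.mem_union_left _ hb)
    have hmem : s(a, b) ∈ Unc := by
      rw [hUncDef, Finset.mem_filter, SimpleGraph.mem_edgeFinset, SimpleGraph.mem_edgeSet]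
      refine ⟨hab, fun v hv => ?_⟩
      rcases Sym2.mem_iff.mp hv with rfl | rfl
      · exact ha
      · exact hb
    have hout : (s(a, b) : Sym2 (Fin (k + l))).out.1 ∈ s(a, b) := Sym2.out_fst_mem _
    have hin : (s(a, b) : Sym2 (Fin (k + l))).out.1 ∈ C :=
      Finset.mem_union_right _ (Finset.mem_image_of_mem _ hmem)
    rcases Sym2.mem_iff.mp hout with h | h
    · exact Or.inl (h ▸ hin)
    · exact Or.inr (h ▸ hin)
  have hCbig := part2 C hCcover
  have hCsmall : C.card ≤ t + 1 := by
    calc C.card ≤ S0.card + (Unc.image (fun e => e.out.1)).card := Finset.card_union_le _ _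
      _ ≤ S0.card + Unc.card := by
          exact Nat.add_le_add_left (Finset.card_image_le) _
      _ ≤ t + 1 := hcount
  omega
end

section
/- Let k ≥ 4 be even and ℓ ≥ 3 be odd, and set t = (k+ℓ-3)/2. Then H'(n,p,t+1), the graph obtained from K_t ∨ T_p(n-t) by adding one extra edge inside one class of the Turán part, is C_{k,ℓ}^{p+1}-free: the number of (p+1)-cliques of any potential copy of C_{k,ℓ}^{p+1} is at most 2(t-1)+3+1 = k+ℓ-1 < k+ℓ. -/
open SimpleGraph

section Aux

open SimpleGraph

lemma lol_adj_val {k l : ℕ} {v w : Fin (k+l)} (h : (lollipop k l).Adj v w) :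
    v.val ≠ w.val ∧
      ((w.val = v.val + 1 ∧ w.val < k) ∨ (v.val = 0 ∧ w.val = k - 1) ∨
        (v.val = 0 ∧ w.val = k) ∨ (w.val = v.val + 1 ∧ k ≤ v.val) ∨
       (v.val = w.val + 1 ∧ v.val < k) ∨ (w.val = 0 ∧ v.val = k - 1) ∨
        (w.val = 0 ∧ v.val = k) ∨ (v.val = w.val + 1 ∧ k ≤ w.val)) := by
  rw [lollipop, SimpleGraph.fromRel_adj] at h
  obtain ⟨hne, h⟩ := h
  refine ⟨fun hh => hne (Fin.ext hh), ?_⟩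
  tauto

lemma lol_deg3 {k l : ℕ} (hk : 4 ≤ k) (hl : 3 ≤ l) (v : Fin (k+l))
    (S : Finset (lollipop k l).edgeSet)
    (hS : ∀ e ∈ S, v ∈ (e.1 : Sym2 (Fin (k+l)))) : S.card ≤ 3 := by
  classical
  have hcard : S.card ≤ (insert (v.val + 1) (insert (if v.val = 0 then k - 1 else v.val - 1)
      ({if v.val = 0 then k else 0} : Finset ℕ))).card := by
    apply Finset.card_le_card_of_injOn
      (fun e => if hm : v ∈ (e.1 : Sym2 (Fin (k+l))) then (Sym2.Mem.other' hm).val else 0)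
    · intro e he
      have hm := hS e he
      simp only [dif_pos hm]
      have hadj : (lollipop k l).Adj v (Sym2.Mem.other' hm) := by
        have h2 := e.2
        rw [← Sym2.other_spec' hm] at h2
        exact (SimpleGraph.mem_edgeSet _).mp h2
      have := lol_adj_val hadj
      have hvlt := v.isLt
      have holt := (Sym2.Mem.other' hm).isLt
      simp only [Finset.mem_coe, Finset.mem_insert, Finset.mem_singleton]
      split_ifs <;> omega
    · intro e₁ h₁ e₂ h₂ heq
      have m₁ := hS e₁ (Finset.mem_coe.mp h₁)
      have m₂ := hS e₂ (Finset.mem_coe.mp h₂)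
      simp only [dif_pos m₁, dif_pos m₂] at heq
      have : Sym2.Mem.other' m₁ = Sym2.Mem.other' m₂ := Fin.ext heq
      apply Subtype.ext
      rw [← Sym2.other_spec' m₁, ← Sym2.other_spec' m₂, this]
  refine hcard.trans ?_
  refine (Finset.card_insert_le _ _).trans (Nat.succ_le_succ ?_)
  refine (Finset.card_insert_le _ _).trans (Nat.succ_le_succ ?_)
  simp

lemma lol_deg2 {k l : ℕ} (hk : 4 ≤ k) (hl : 3 ≤ l) (v : Fin (k+l)) (hv : v.val ≠ 0)
    (S : Finset (lollipop k l).edgeSet)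
    (hS : ∀ e ∈ S, v ∈ (e.1 : Sym2 (Fin (k+l)))) : S.card ≤ 2 := by
  classical
  have hcard : S.card ≤ (insert (if v.val = k - 1 then v.val - 1 else v.val + 1)
      ({if v.val = k - 1 then 0 else if v.val = k then 0 else v.val - 1} : Finset ℕ)).card := by
    apply Finset.card_le_card_of_injOn
      (fun e => if hm : v ∈ (e.1 : Sym2 (Fin (k+l))) then (Sym2.Mem.other' hm).val else 0)
    · intro e he
      have hm := hS e he
      simp only [dif_pos hm]
      have hadj : (lollipop k l).Adj v (Sym2.Mem.other' hm) := by
        have h2 := e.2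
        rw [← Sym2.other_spec' hm] at h2
        exact (SimpleGraph.mem_edgeSet _).mp h2
      have := lol_adj_val hadj
      have hvlt := v.isLt
      have holt := (Sym2.Mem.other' hm).isLt
      simp only [Finset.mem_coe, Finset.mem_insert, Finset.mem_singleton]
      split_ifs <;> omega
    · intro e₁ h₁ e₂ h₂ heq
      have m₁ := hS e₁ (Finset.mem_coe.mp h₁)
      have m₂ := hS e₂ (Finset.mem_coe.mp h₂)
      simp only [dif_pos m₁, dif_pos m₂] at heq
      have : Sym2.Mem.other' m₁ = Sym2.Mem.other' m₂ := Fin.ext heq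
      apply Subtype.ext
      rw [← Sym2.other_spec' m₁, ← Sym2.other_spec' m₂, this]
  refine hcard.trans ?_
  refine (Finset.card_insert_le _ _).trans (Nat.succ_le_succ ?_)
  simp

lemma lol_edges (k l : ℕ) (hk : 4 ≤ k) (hl : 3 ≤ l) :
    ∃ g : Fin (k + l) → (lollipop k l).edgeSet, Function.Injective g := by
  have h0 : 0 < k + l := by omega
  have hk1 : k - 1 < k + l := by omega
  have hkk : k < k + l := by omega
  refine ⟨fun j => if hj0 : j.val = 0 then ⟨s(⟨0, h0⟩, ⟨k - 1, hk1⟩), ?_⟩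
    else if hjk : j.val = k then ⟨s(⟨0, h0⟩, ⟨k, hkk⟩), ?_⟩
    else ⟨s(⟨j.val - 1, by omega⟩, j), ?_⟩, ?_⟩
  · rw [SimpleGraph.mem_edgeSet, lollipop, SimpleGraph.fromRel_adj]
    refine ⟨fun hh => by have := congrArg Fin.val hh; simp at this; omega, ?_⟩
    simp only [Fin.val_mk]
    exact Or.inl (Or.inr (Or.inl ⟨trivial, trivial⟩))
  · rw [SimpleGraph.mem_edgeSet, lollipop, SimpleGraph.fromRel_adj]
    refine ⟨fun hh => by have := congrArg Fin.val hh; simp at this; omega, ?_⟩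
    simp only [Fin.val_mk]
    exact Or.inl (Or.inr (Or.inr (Or.inl ⟨trivial, trivial⟩)))
  · rw [SimpleGraph.mem_edgeSet, lollipop, SimpleGraph.fromRel_adj]
    have hjl := j.isLt
    refine ⟨fun hh => by have := congrArg Fin.val hh; simp at this; omega, ?_⟩
    simp only [Fin.val_mk]
    omega
  · intro i j hij
    have hij' := congrArg (fun z => (z : (lollipop k l).edgeSet).1) hij
    simp only at hij'
    have hi := i.isLt
    have hj := j.isLt
    apply Fin.ext
    split_ifs at hij' <;>
      rw [Sym2.eq_iff] at hij' <;>
      simp only [Fin.mk.injEq, Fin.ext_iff, Fin.val_mk] at hij' <;>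
      omega

/-- Membership of a blow-up vertex in the clique associated to the edge `e`. -/
def memC {k l pm : ℕ} (u : Fin (k + l) ⊕ ((lollipop k l).edgeSet × Fin pm))
    (e : (lollipop k l).edgeSet) : Prop :=
  match u with
  | .inl a => a ∈ (e.1 : Sym2 (Fin (k + l)))
  | .inr q => q.1 = e

lemma memC_clique {k l p : ℕ} (e : (lollipop k l).edgeSet)
    (u v : Fin (k + l) ⊕ ((lollipop k l).edgeSet × Fin (p - 1)))
    (hu : memC u e) (hv : memC v e) (huv : u ≠ v) :
    (edgeBlowup (lollipop k l) p).Adj u v := by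
  cases u with
  | inl a =>
    cases v with
    | inl b =>
      have hab : a ≠ b := fun hh => huv (by rw [hh])
      have hu' : a ∈ (e.1 : Sym2 (Fin (k + l))) := hu
      have hv' : b ∈ (e.1 : Sym2 (Fin (k + l))) := hv
      have he : e.1 = s(a, b) := (Sym2.mem_and_mem_iff hab).mp ⟨hu', hv'⟩
      show (lollipop k l).Adj a b
      exact (SimpleGraph.mem_edgeSet _).mp (he ▸ e.2)
    | inr q =>
      show a ∈ (q.1.1 : Sym2 (Fin (k + l)))
      have hv' : q.1 = e := hv
      rw [hv']
      exact hu
  | inr q =>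
    cases v with
    | inl b =>
      show b ∈ (q.1.1 : Sym2 (Fin (k + l)))
      have hu' : q.1 = e := hu
      rw [hu']
      exact hv
    | inr r =>
      have hu' : q.1 = e := hu
      have hv' : r.1 = e := hv
      refine ⟨hu'.trans hv'.symm, fun hh => huv ?_⟩
      have : q = r := Prod.ext (hu'.trans hv'.symm) hh
      rw [this]

lemma memC_common {k l pm : ℕ} {e e' : (lollipop k l).edgeSet}
    {u v : Fin (k + l) ⊕ ((lollipop k l).edgeSet × Fin pm)}
    (hu : memC u e) (hv : memC v e) (hu' : memC u e') (hv' : memC v e')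
    (huv : u ≠ v) : e = e' := by
  cases u with
  | inr q => exact (show q.1 = e from hu).symm.trans (show q.1 = e' from hu')
  | inl a =>
    cases v with
    | inr r => exact (show r.1 = e from hv).symm.trans (show r.1 = e' from hv')
    | inl b =>
      have hab : a ≠ b := fun hh => huv (by rw [hh])
      apply Subtype.ext
      have h1 : e.1 = s(a, b) := (Sym2.mem_and_mem_iff hab).mp ⟨hu, hv⟩
      have h2 : e'.1 = s(a, b) := (Sym2.mem_and_mem_iff hab).mp ⟨hu', hv'⟩
      rw [h1, h2]

/-- The `p+1` vertices of the blown-up clique of the edge `e`. -/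
def sigC {k l p : ℕ} (hp : 2 ≤ p) (e : (lollipop k l).edgeSet) (a b : Fin (k + l))
    (i : Fin (p + 1)) : Fin (k + l) ⊕ ((lollipop k l).edgeSet × Fin (p - 1)) :=
  if i.val = 0 then Sum.inl a else if i.val = 1 then Sum.inl b
  else Sum.inr (e, ⟨i.val - 2, by have := i.isLt; omega⟩)

lemma sigC_mem {k l p : ℕ} (hp : 2 ≤ p) (e : (lollipop k l).edgeSet) (a b : Fin (k + l))
    (hab : e.1 = s(a, b)) (i : Fin (p + 1)) : memC (sigC hp e a b i) e := by
  unfold sigC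
  split_ifs
  · show a ∈ (e.1 : Sym2 (Fin (k + l)))
    rw [hab]; exact Sym2.mem_mk_left _ _
  · show b ∈ (e.1 : Sym2 (Fin (k + l)))
    rw [hab]; exact Sym2.mem_mk_right _ _
  · show (e, _).1 = e
    rfl

lemma sigC_inj {k l p : ℕ} (hp : 2 ≤ p) (e : (lollipop k l).edgeSet) (a b : Fin (k + l))
    (hab : a ≠ b) : Function.Injective (sigC hp e a b) := by
  intro i j hij
  unfold sigC at hij
  split_ifs at hij with h1 h2 h3 h4 h5 h6 h7 h8 h9
  all_goals first
    | (apply Fin.ext; omega)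
    | (exact absurd (Sum.inl.inj hij) hab)
    | (exact absurd (Sum.inl.inj hij).symm hab)
    | (rw [Sum.inr.injEq, Prod.mk.injEq, Fin.mk.injEq] at hij
       exact Fin.ext (by omega))
    | simp at hij

lemma host_adj {n p t : ℕ} (hp : 2 ≤ p) (x y : Fin (n - t))
    (a b : Fin (n - t)) (hmod : a.val % p = b.val % p)
    (hab : (Hgraph n p (t + 1) ⊔
        SimpleGraph.fromEdgeSet {s(Sum.inr x, Sum.inr y)}).Adj (Sum.inr a) (Sum.inr b)) :
    (a = x ∧ b = y) ∨ (a = y ∧ b = x) := by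
  rw [SimpleGraph.sup_adj] at hab
  rcases hab with hab | hab
  · exfalso
    have hturan : (turanGraph (n - t) p).Adj a b := hab
    simp only [turanGraph] at hturan
    exact hturan hmod
  · rw [SimpleGraph.fromEdgeSet_adj, Set.mem_singleton_iff] at hab
    have := hab.1
    rw [Sym2.eq_iff] at this
    rcases this with ⟨h1, h2⟩ | ⟨h1, h2⟩
    · exact Or.inl ⟨Sum.inr.inj h1, Sum.inr.inj h2⟩
    · exact Or.inr ⟨Sum.inr.inj h1, Sum.inr.inj h2⟩

lemma claimA {k l p n t : ℕ} (hk : 4 ≤ k) (hp : 2 ≤ p) (x y : Fin (n - t))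
    (f : (Fin (k + l) ⊕ ((lollipop k l).edgeSet × Fin (p - 1))) → (Fin t ⊕ Fin (n - t)))
    (fadj : ∀ ⦃u v⦄, (edgeBlowup (lollipop k l) p).Adj u v →
      (Hgraph n p (t + 1) ⊔
        SimpleGraph.fromEdgeSet {s(Sum.inr x, Sum.inr y)}).Adj (f u) (f v))
    (e : (lollipop k l).edgeSet)
    (hc : ¬ ∃ z : Fin t × (Fin (k + l) ⊕ ((lollipop k l).edgeSet × Fin (p - 1))),
      memC z.2 e ∧ f z.2 = Sum.inl z.1) :
    ∃ u v, memC u e ∧ memC v e ∧ f u = Sum.inr x ∧ f v = Sum.inr y := by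
  classical
  obtain ⟨a, b, hab⟩ : ∃ a b, e.1 = s(a, b) :=
    Sym2.ind (f := fun z => ∀ _ : z = e.1, ∃ a b, e.1 = s(a, b))
      (fun a b hz => ⟨a, b, hz.symm⟩) e.1 rfl
  have hne : a ≠ b := by
    have h2 := e.2
    rw [hab, SimpleGraph.mem_edgeSet] at h2
    exact h2.ne
  have hir : ∀ i : Fin (p + 1), ∃ c, f (sigC hp e a b i) = Sum.inr c := by
    intro i
    rcases hfc : f (sigC hp e a b i) with s | c
    · exact absurd ⟨(s, sigC hp e a b i), sigC_mem hp e a b hab i, hfc⟩ hc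
    · exact ⟨c, rfl⟩
  choose c hcf using hir
  obtain ⟨i, j, hij, hrho⟩ := Fintype.exists_ne_map_eq_of_card_lt
    (fun i : Fin (p + 1) => (⟨(c i).val % p, Nat.mod_lt _ (by omega)⟩ : Fin p)) (by simp)
  have hmods : (c i).val % p = (c j).val % p := by
    simpa [Fin.mk.injEq] using hrho
  have hne2 : sigC hp e a b i ≠ sigC hp e a b j := fun hh => hij (sigC_inj hp e a b hne hh)
  have hadj := fadj (memC_clique e _ _ (sigC_mem hp e a b hab i) (sigC_mem hp e a b hab j) hne2)
  rw [hcf i, hcf j] at hadj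
  rcases host_adj hp x y (c i) (c j) hmods hadj with ⟨h1, h2⟩ | ⟨h1, h2⟩
  · exact ⟨_, _, sigC_mem hp e a b hab i, sigC_mem hp e a b hab j,
      by rw [hcf i, h1], by rw [hcf j, h2]⟩
  · exact ⟨_, _, sigC_mem hp e a b hab j, sigC_mem hp e a b hab i,
      by rw [hcf j, h2], by rw [hcf i, h1]⟩

end Aux

/-- For `k ≥ 4` even, `ℓ ≥ 3` odd, `p ≥ 2`, `t = (k+ℓ-3)/2` and `n`
sufficiently large, every graph `H'(n,p,t+1)` obtained from `K_t ∨ T_p(n-t)` by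
adding one extra edge inside one class of the Turán part is `C_{k,ℓ}^{p+1}`-free. -/


theorem stmt5 (k l p t : ℕ) (hk : 4 ≤ k) (hke : Even k) (hl : 3 ≤ l) (hlo : Odd l)
    (hp : 2 ≤ p) (ht : t = (k + l - 3) / 2) :
    ∃ N : ℕ, ∀ n ≥ N, ∀ x y : Fin (n - t), x ≠ y → x.val % p = y.val % p →
      ¬ IsCont (edgeBlowup (lollipop k l) p)
        (Hgraph n p (t + 1) ⊔
          SimpleGraph.fromEdgeSet {s(Sum.inr x, Sum.inr y)}) := by
  classical
  have hkl : k + l = 2 * t + 3 := by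
    obtain ⟨a, ha⟩ := hke; obtain ⟨b, hb⟩ := hlo; omega
  refine ⟨0, fun n _ x y hxy hmod => ?_⟩
  rintro ⟨f, finj, fadj⟩
  haveI : Fintype (lollipop k l).edgeSet := Fintype.ofFinite _
  obtain ⟨g, hginj⟩ := lol_edges k l hk hl
  set E₀ : Finset (lollipop k l).edgeSet := Finset.univ.image g with hE₀
  have hE₀card : E₀.card = k + l := by
    rw [hE₀, Finset.card_image_of_injective _ hginj, Finset.card_univ, Fintype.card_fin]
  set h : (lollipop k l).edgeSet → Fin t ⊕ Unit := fun e =>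
    if hc : ∃ z : Fin t × (Fin (k + l) ⊕ ((lollipop k l).edgeSet × Fin (p - 1))),
        memC z.2 e ∧ f z.2 = Sum.inl z.1 then Sum.inl hc.choose.1 else Sum.inr () with hh
  have hspec1 : ∀ e s', h e = Sum.inl s' → ∃ u, memC u e ∧ f u = Sum.inl s' := by
    intro e s' he
    simp only [hh] at he
    by_cases hc : ∃ z : Fin t × (Fin (k + l) ⊕ ((lollipop k l).edgeSet × Fin (p - 1))),
        memC z.2 e ∧ f z.2 = Sum.inl z.1
    · rw [dif_pos hc] at he
      obtain ⟨hm, hf⟩ := hc.choose_spec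
      have he' : hc.choose.1 = s' := Sum.inl.inj he
      exact ⟨hc.choose.2, hm, by rw [hf, he']⟩
    · rw [dif_neg hc] at he
      exact absurd he (by simp)
  have hspec2 : ∀ e, h e = Sum.inr () →
      ¬ ∃ z : Fin t × (Fin (k + l) ⊕ ((lollipop k l).edgeSet × Fin (p - 1))),
        memC z.2 e ∧ f z.2 = Sum.inl z.1 := by
    intro e he
    simp only [hh] at he
    by_cases hc : ∃ z : Fin t × (Fin (k + l) ⊕ ((lollipop k l).edgeSet × Fin (p - 1))),
        memC z.2 e ∧ f z.2 = Sum.inl z.1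
    · rw [dif_pos hc] at he
      exact absurd he (by simp)
    · exact hc
  have hcinf : (E₀.filter fun e => h e = Sum.inr ()).card ≤ 1 := by
    rw [Finset.card_le_one]
    intro e he e' he'
    rw [Finset.mem_filter] at he he'
    obtain ⟨u, v, hu, hv, hfu, hfv⟩ := claimA hk hp x y f fadj e (hspec2 e he.2)
    obtain ⟨u', v', hu', hv', hfu', hfv'⟩ := claimA hk hp x y f fadj e' (hspec2 e' he'.2)
    have h1 : u' = u := finj (by rw [hfu, hfu'])
    have h2 : v' = v := finj (by rw [hfv, hfv'])
    subst h1; subst h2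
    refine memC_common hu hv hu' hv' (fun hh2 => hxy ?_)
    rw [hh2] at hfu
    rw [hfu] at hfv
    exact Sum.inr.inj hfv
  have hfib : ∀ s : Fin t, (E₀.filter fun e => h e = Sum.inl s).card ≤ 3 ∧
      (3 ≤ (E₀.filter fun e => h e = Sum.inl s).card →
        ∃ v0 : Fin (k + l), v0.val = 0 ∧ f (Sum.inl v0) = Sum.inl s) := by
    intro s
    by_cases hne : (E₀.filter fun e => h e = Sum.inl s).Nonempty
    · obtain ⟨e0, he0⟩ := hne
      rw [Finset.mem_filter] at he0
      obtain ⟨u, hu, hfu⟩ := hspec1 _ _ he0.2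
      have hall : ∀ e ∈ (E₀.filter fun e => h e = Sum.inl s), memC u e := by
        intro e he
        rw [Finset.mem_filter] at he
        obtain ⟨u', hu', hfu'⟩ := hspec1 _ _ he.2
        have : u' = u := finj (by rw [hfu, hfu'])
        rw [← this]
        exact hu'
      cases u with
      | inr q =>
        have hsub : (E₀.filter fun e => h e = Sum.inl s) ⊆ {q.1} := by
          intro e he
          rw [Finset.mem_singleton]
          exact (hall e he).symm
        have hc1 : (E₀.filter fun e => h e = Sum.inl s).card ≤ 1 :=
          (Finset.card_le_card hsub).trans (le_of_eq (Finset.card_singleton _))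
        exact ⟨by omega, fun h3 => by omega⟩
      | inl v =>
        have hS : ∀ e ∈ (E₀.filter fun e => h e = Sum.inl s), v ∈ (e.1 : Sym2 (Fin (k + l))) :=
          fun e he => hall e he
        refine ⟨lol_deg3 hk hl v _ hS, fun h3 => ⟨v, ?_, hfu⟩⟩
        by_contra hv0
        have := lol_deg2 hk hl v hv0 _ hS
        omega
    · rw [Finset.not_nonempty_iff_eq_empty] at hne
      rw [hne]
      simp
  have hbig : (Finset.univ.filter fun s : Fin t =>
      3 ≤ (E₀.filter fun e => h e = Sum.inl s).card).card ≤ 1 := by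
    rw [Finset.card_le_one]
    intro s hs s' hs'
    rw [Finset.mem_filter] at hs hs'
    obtain ⟨v0, hv0, hf0⟩ := (hfib s).2 hs.2
    obtain ⟨v0', hv0', hf0'⟩ := (hfib s').2 hs'.2
    have hvv : v0 = v0' := Fin.ext (by rw [hv0, hv0'])
    rw [hvv] at hf0
    rw [hf0] at hf0'
    exact Sum.inl.inj hf0'
  have hsplit : E₀.card = (∑ s : Fin t, (E₀.filter fun e => h e = Sum.inl s).card)
      + (E₀.filter fun e => h e = Sum.inr ()).card := by
    rw [Finset.card_eq_sum_card_fiberwise (f := h) (t := Finset.univ)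
      (fun z _ => Finset.mem_univ _), Fintype.sum_sum_type]
    simp
  have hsum : (∑ s : Fin t, (E₀.filter fun e => h e = Sum.inl s).card) ≤ 2 * t + 1 := by
    have step1 : (∑ s : Fin t, (E₀.filter fun e => h e = Sum.inl s).card) ≤
        ∑ s : Fin t, (2 + if 3 ≤ (E₀.filter fun e => h e = Sum.inl s).card then 1 else 0) := by
      apply Finset.sum_le_sum
      intro s _
      have h3 := (hfib s).1
      by_cases hcs : 3 ≤ (E₀.filter fun e => h e = Sum.inl s).card
      · rw [if_pos hcs]; omega
      · rw [if_neg hcs]; omega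
    refine step1.trans ?_
    rw [Finset.sum_add_distrib, Finset.sum_const, Finset.sum_boole]
    simp only [Finset.card_univ, Fintype.card_fin, smul_eq_mul, mul_one, Nat.cast_id]
    omega
  omega
end

section
/- For odd k ≥ 3 and ℓ ≥ 1, the lollipop C_{k,ℓ} is a subgraph of the join of (k+ℓ) disjoint edges with an independent set of size k+ℓ; that is, C_{k,ℓ} ⊆ ((k+ℓ)·P_2) ∨ I_{k+ℓ}. -/
open SimpleGraph

/-- For odd `k ≥ 3` and `ℓ ≥ 1`, the lollipop `C_{k,ℓ}` is a subgraph
of the join of `k+ℓ` disjoint edges with an independent set of size `k+ℓ`. -/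
theorem stmt7 (k l : ℕ) (hk : 3 ≤ k) (hko : Odd k) (hl : 1 ≤ l) :
    IsCont (lollipop k l)
      (gJoin (copies (k + l) (pathGraph 2)) (⊥ : SimpleGraph (Fin (k + l)))) := by
  obtain ⟨m, hm⟩ := hko
  have hkl : 0 < k + l := by omega
  refine ⟨fun v => if v.val % 2 = 1 then Sum.inr ⟨v.val / 2, by omega⟩
    else if v.val = k - 1 then Sum.inl (⟨0, hkl⟩, 1)
    else Sum.inl (⟨v.val / 2, by omega⟩, 0), ?_, ?_⟩
  · intro a b hab
    have ha := a.isLt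
    have hb := b.isLt
    simp only at hab
    split_ifs at hab with h1 h2 h3 h3 h4 <;>
      simp only [Sum.inr.injEq, Sum.inl.injEq, Prod.mk.injEq, Fin.mk.injEq] at hab <;>
      exact Fin.ext (by omega)
  · intro a b hab
    have ha := a.isLt
    have hb := b.isLt
    rw [lollipop, fromRel_adj] at hab
    obtain ⟨hne, hrel⟩ := hab
    have hne' : a.val ≠ b.val := fun h => hne (Fin.ext h)
    -- key: endpoints of every edge have different parity, except the 0—(k-1) edge
    simp only
    by_cases hsp : (a.val = 0 ∧ b.val = k - 1) ∨ (b.val = 0 ∧ a.val = k - 1)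
    · -- special edge
      have h1 : ¬ (a.val % 2 = 1) := by omega
      have h2 : ¬ (b.val % 2 = 1) := by omega
      rcases hsp with ⟨e1, e2⟩ | ⟨e1, e2⟩
      · rw [if_neg h1, if_neg h2, if_neg (by omega), if_pos e2]
        exact ⟨Fin.ext (by simp; omega), by rw [pathGraph_adj]; left; rfl⟩
      · rw [if_neg h1, if_neg h2, if_pos e2, if_neg (by omega)]
        exact ⟨Fin.ext (by simp; omega), by rw [pathGraph_adj]; right; rfl⟩
    · -- all other edges: parities differ
      have hpar : a.val % 2 ≠ b.val % 2 := by
        rcases hrel with (⟨h, _⟩ | ⟨h1, h2⟩ | ⟨h1, h2⟩ | ⟨h, _⟩) <;> omega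
      by_cases h1 : a.val % 2 = 1
      · have h2 : ¬ (b.val % 2 = 1) := by omega
        rw [if_pos h1, if_neg h2]
        split_ifs <;> trivial
      · have h2 : b.val % 2 = 1 := by omega
        rw [if_neg h1, if_pos h2]
        split_ifs <;> trivial
end

section
/- Splitting the center vertex (the unique vertex of degree 3) of the lollipop C_{k,ℓ} yields the disjoint union P_{k+1} ∪ P_{ℓ+1}; consequently, for every p ≥ 2 and m = |V(C_{k,ℓ}^{p+1})|, the edge blow-up C_{k,ℓ}^{p+1} is a subgraph of (P_{k+1} ∪ P_{ℓ+1}) ∨ K_{p-1}(m, m, …, m). -/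
open SimpleGraph

section StmtAux

lemma lollipop_adj' {k l : ℕ} {a b : Fin (k + l)} (h : (lollipop k l).Adj a b) :
    a.val ≠ b.val ∧
    ((b.val = a.val + 1 ∧ b.val < k) ∨ (a.val = 0 ∧ b.val = k - 1) ∨
     (a.val = 0 ∧ b.val = k) ∨ (b.val = a.val + 1 ∧ k ≤ a.val) ∨
     (a.val = b.val + 1 ∧ a.val < k) ∨ (b.val = 0 ∧ a.val = k - 1) ∨
     (b.val = 0 ∧ a.val = k) ∨ (a.val = b.val + 1 ∧ k ≤ b.val)) := by
  rw [lollipop, SimpleGraph.fromRel_adj] at h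
  obtain ⟨hne, h⟩ := h
  exact ⟨fun hv => hne (Fin.ext hv), by tauto⟩

lemma nbr_zero {k l : ℕ} {a b : Fin (k + l)} (h : (lollipop k l).Adj a b)
    (ha : a.val = 0) : b.val = 1 ∨ b.val = k - 1 ∨ b.val = k := by
  obtain ⟨hne, H⟩ := lollipop_adj' h
  omega

lemma special_edge {k l : ℕ} (hk : 3 ≤ k) (hl : 1 ≤ l) {s : Sym2 (Fin (k + l))}
    (hs : s ∈ (lollipop k l).edgeSet)
    (hmem : (⟨0, by omega⟩ : Fin (k + l)) ∈ s) :
    s = s((⟨0, by omega⟩ : Fin (k + l)), (⟨1, by omega⟩ : Fin (k + l))) ∨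
    s = s((⟨0, by omega⟩ : Fin (k + l)), (⟨k - 1, by omega⟩ : Fin (k + l))) ∨
    s = s((⟨0, by omega⟩ : Fin (k + l)), (⟨k, by omega⟩ : Fin (k + l))) := by
  induction s using Sym2.ind with
  | _ x y =>
    rw [SimpleGraph.mem_edgeSet] at hs
    rw [Sym2.mem_iff] at hmem
    rcases hmem with hx | hy
    · subst hx
      rcases nbr_zero hs rfl with h | h | h
      · exact Or.inl (by rw [show y = (⟨1, by omega⟩ : Fin (k + l)) from Fin.ext h])
      · exact Or.inr (Or.inl (by rw [show y = (⟨k - 1, by omega⟩ : Fin (k + l)) from Fin.ext h]))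
      · exact Or.inr (Or.inr (by rw [show y = (⟨k, by omega⟩ : Fin (k + l)) from Fin.ext h]))
    · subst hy
      rw [Sym2.eq_swap]
      rcases nbr_zero hs.symm rfl with h | h | h
      · exact Or.inl (by rw [show x = (⟨1, by omega⟩ : Fin (k + l)) from Fin.ext h])
      · exact Or.inr (Or.inl (by rw [show x = (⟨k - 1, by omega⟩ : Fin (k + l)) from Fin.ext h]))
      · exact Or.inr (Or.inr (by rw [show x = (⟨k, by omega⟩ : Fin (k + l)) from Fin.ext h]))

noncomputable def vMap (k l p m : ℕ) (hk : 3 ≤ k) (hl : 1 ≤ l) (hp1 : 0 < p - 1)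
    (φ : (Fin (k + l) ⊕ ((lollipop k l).edgeSet × Fin (p - 1))) ≃ Fin m)
    (a : Fin (k + l)) :
    (Fin (k + 1) ⊕ Fin (l + 1)) ⊕ (Fin (p - 1) × Fin m) :=
  if a.val = 0 then .inr (⟨0, hp1⟩, φ (.inl a))
  else if h2 : a.val < k then .inl (.inl ⟨a.val, by omega⟩)
  else .inl (.inr ⟨a.val - k + 1, by have := a.isLt; omega⟩)

noncomputable def eMap (k l p m : ℕ) (hk : 3 ≤ k) (hl : 1 ≤ l) (hp1 : 0 < p - 1)
    (φ : (Fin (k + l) ⊕ ((lollipop k l).edgeSet × Fin (p - 1))) ≃ Fin m)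
    (e : (lollipop k l).edgeSet) (i : Fin (p - 1)) :
    (Fin (k + 1) ⊕ Fin (l + 1)) ⊕ (Fin (p - 1) × Fin m) :=
  if (⟨0, by omega⟩ : Fin (k + l)) ∈ (e.1 : Sym2 (Fin (k + l))) ∧ i = ⟨0, hp1⟩ then
    if (e.1 : Sym2 (Fin (k + l)))
        = s((⟨0, by omega⟩ : Fin (k + l)), (⟨1, by omega⟩ : Fin (k + l))) then
      .inl (.inl ⟨0, by omega⟩)
    else if (e.1 : Sym2 (Fin (k + l)))
        = s((⟨0, by omega⟩ : Fin (k + l)), (⟨k - 1, by omega⟩ : Fin (k + l))) then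
      .inl (.inl ⟨k, by omega⟩)
    else .inl (.inr ⟨0, by omega⟩)
  else .inr (i, φ (.inr (e, ⟨0, hp1⟩)))

end StmtAux

/-- Splitting the center of the lollipop `C_{k,ℓ}` yields
`P_{k+1} ∪ P_{ℓ+1}`; consequently, for every `p ≥ 2` and
`m = |V(C_{k,ℓ}^{p+1})|`, the edge blow-up `C_{k,ℓ}^{p+1}` is a subgraph of
`(P_{k+1} ∪ P_{ℓ+1}) ∨ K_{p-1}(m,…,m)`. -/
theorem stmt8 (k l p m : ℕ) (hk : 3 ≤ k) (hl : 1 ≤ l) (hp : 2 ≤ p)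
    (hm : m = Nat.card (Fin (k + l) ⊕ ((lollipop k l).edgeSet × Fin (p - 1)))) :
    IsCont (edgeBlowup (lollipop k l) p)
      (gJoin (dUnion (pathGraph (k + 1)) (pathGraph (l + 1)))
        (completeMultipartite (p - 1) m)) := by
  classical
  have hp1 : 0 < p - 1 := by omega
  obtain ⟨φ⟩ : Nonempty ((Fin (k + l) ⊕ ((lollipop k l).edgeSet × Fin (p - 1))) ≃ Fin m) :=
    ⟨Finite.equivFinOfCardEq hm.symm⟩
  have hkl : 0 < k + l := by omega
  have d12 : s((⟨0, hkl⟩ : Fin (k + l)), (⟨1, by omega⟩ : Fin (k + l)))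
      ≠ s((⟨0, hkl⟩ : Fin (k + l)), (⟨k - 1, by omega⟩ : Fin (k + l))) := by
    simp only [ne_eq, Sym2.eq_iff, Fin.mk.injEq]; omega
  have d13 : s((⟨0, hkl⟩ : Fin (k + l)), (⟨1, by omega⟩ : Fin (k + l)))
      ≠ s((⟨0, hkl⟩ : Fin (k + l)), (⟨k, by omega⟩ : Fin (k + l))) := by
    simp only [ne_eq, Sym2.eq_iff, Fin.mk.injEq]; omega
  have d23 : s((⟨0, hkl⟩ : Fin (k + l)), (⟨k - 1, by omega⟩ : Fin (k + l)))
      ≠ s((⟨0, hkl⟩ : Fin (k + l)), (⟨k, by omega⟩ : Fin (k + l))) := by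
    simp only [ne_eq, Sym2.eq_iff, Fin.mk.injEq]; omega
  have sp := fun (f : (lollipop k l).edgeSet)
      (hm0 : (⟨0, hkl⟩ : Fin (k + l)) ∈ (f.1 : Sym2 (Fin (k + l)))) =>
    special_edge hk hl f.2 hm0
  refine ⟨Sum.elim (vMap k l p m hk hl hp1 φ)
    (fun x => eMap k l p m hk hl hp1 φ x.1 x.2), ?_, ?_⟩
  · -- injectivity
    rintro (a | ⟨e, i⟩) (b | ⟨e', i'⟩) h <;>
      simp only [Sum.elim_inl, Sum.elim_inr] at h
    · -- inl inl
      unfold vMap at h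
      split_ifs at h with h1 h2 h3 h4 h5 h6 <;> simp [Fin.ext_iff] at h <;>
        exact congrArg Sum.inl (Fin.ext (by omega))
    · -- inl inr
      exfalso
      unfold vMap eMap at h
      split_ifs at h with h1 h2 h3 h4 h5 <;> simp [Fin.ext_iff] at h <;> omega
    · -- inr inl
      exfalso
      unfold vMap eMap at h
      split_ifs at h with h1 h2 h3 h4 h5 <;> simp [Fin.ext_iff] at h <;> omega
    · -- inr inr
      by_cases hc : ((⟨0, hkl⟩ : Fin (k + l)) ∈ (e.1 : Sym2 (Fin (k + l))) ∧ i = ⟨0, hp1⟩)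
      · by_cases hc' : ((⟨0, hkl⟩ : Fin (k + l)) ∈ (e'.1 : Sym2 (Fin (k + l))) ∧ i' = ⟨0, hp1⟩)
        · obtain rfl : e = e' := by
            rcases sp e hc.1 with he | he | he <;> rcases sp e' hc'.1 with he' | he' | he' <;>
              first
                | exact Subtype.ext (he.trans he'.symm)
                | (exfalso
                   unfold eMap at h
                   rw [if_pos hc, if_pos hc', he, he'] at h
                   simp [d12, d13, d23, d12.symm, d13.symm, d23.symm, Fin.ext_iff] at h <;>
                     omega)
          obtain rfl : i = i' := hc.2.trans hc'.2.symm
          rfl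
        · exfalso
          unfold eMap at h
          rw [if_pos hc, if_neg hc'] at h
          split_ifs at h <;> simp at h
      · by_cases hc' : ((⟨0, hkl⟩ : Fin (k + l)) ∈ (e'.1 : Sym2 (Fin (k + l))) ∧ i' = ⟨0, hp1⟩)
        · exfalso
          unfold eMap at h
          rw [if_neg hc, if_pos hc'] at h
          split_ifs at h <;> simp at h
        · unfold eMap at h
          rw [if_neg hc, if_neg hc'] at h
          simp only [Sum.inr.injEq, Prod.mk.injEq, EmbeddingLike.apply_eq_iff_eq] at h
          obtain ⟨rfl, rfl, -⟩ := h
          rfl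
  · -- adjacency
    have key : ∀ (a : Fin (k + l)) (e : (lollipop k l).edgeSet) (i : Fin (p - 1)),
        a ∈ (e.1 : Sym2 (Fin (k + l))) →
        (gJoin (dUnion (pathGraph (k + 1)) (pathGraph (l + 1)))
          (completeMultipartite (p - 1) m)).Adj
          (vMap k l p m hk hl hp1 φ a) (eMap k l p m hk hl hp1 φ e i) := by
      intro a e i hmem
      by_cases h1 : a.val = 0
      · -- a is the center: goes right
        have hz0e : (⟨0, hkl⟩ : Fin (k + l)) ∈ (e.1 : Sym2 (Fin (k + l))) := by
          rwa [show (⟨0, hkl⟩ : Fin (k + l)) = a from (Fin.ext h1).symm]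
        unfold vMap eMap
        rw [if_pos h1]
        by_cases hc : ((⟨0, hkl⟩ : Fin (k + l)) ∈ (e.1 : Sym2 (Fin (k + l))) ∧ i = ⟨0, hp1⟩)
        · rw [if_pos hc]
          split_ifs <;> exact trivial
        · rw [if_neg hc]
          show (⟨0, hp1⟩ : Fin (p - 1)) ≠ i
          intro hci
          exact hc ⟨hz0e, hci.symm⟩
      · -- a is not the center
        have hza : (⟨0, hkl⟩ : Fin (k + l)) ≠ a := fun hh => h1 (by rw [← hh])
        by_cases hc : ((⟨0, hkl⟩ : Fin (k + l)) ∈ (e.1 : Sym2 (Fin (k + l))) ∧ i = ⟨0, hp1⟩)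
        · -- the split vertex goes left; identify the edge
          have hE : (e.1 : Sym2 (Fin (k + l))) = s((⟨0, hkl⟩ : Fin (k + l)), a) :=
            (Sym2.mem_and_mem_iff hza).mp ⟨hc.1, hmem⟩
          have hadj0 : (lollipop k l).Adj (⟨0, hkl⟩ : Fin (k + l)) a := by
            rw [← SimpleGraph.mem_edgeSet, ← hE]; exact e.2
          have hval : a.val = 1 ∨ a.val = k - 1 ∨ a.val = k := nbr_zero hadj0 rfl
          have hia := a.isLt
          unfold vMap eMap
          rw [if_pos hc, if_neg h1]
          have hC1 : ((e.1 : Sym2 (Fin (k + l)))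
              = s((⟨0, hkl⟩ : Fin (k + l)), (⟨1, by omega⟩ : Fin (k + l)))) ↔ a.val = 1 := by
            rw [hE, Sym2.eq_iff]
            simp only [Fin.mk.injEq, Fin.ext_iff, Fin.val_mk, true_and, false_and, and_true, and_false, or_false, false_or, true_or, or_true]
            omega
          have hC2 : ((e.1 : Sym2 (Fin (k + l)))
              = s((⟨0, hkl⟩ : Fin (k + l)), (⟨k - 1, by omega⟩ : Fin (k + l)))) ↔
              a.val = k - 1 := by
            rw [hE, Sym2.eq_iff]
            simp only [Fin.mk.injEq, Fin.ext_iff, Fin.val_mk, true_and, false_and, and_true, and_false, or_false, false_or, true_or, or_true]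
            omega
          simp only [hC1, hC2]
          split_ifs with hA hB hC <;>
            first
              | (exfalso; omega)
              | (refine pathGraph_adj.mpr ?_; simp only [Fin.val_mk]; omega)
        · -- extra vertex goes right, a goes left: join edge
          unfold vMap eMap
          rw [if_neg hc, if_neg h1]
          split_ifs <;> exact trivial
    rintro (a | ⟨e, i⟩) (b | ⟨e', i'⟩) hadj
    · -- inl inl
      have hadj' : (lollipop k l).Adj a b := hadj
      obtain ⟨hne, H⟩ := lollipop_adj' hadj'
      have hia := a.isLt
      have hib := b.isLt
      simp only [Sum.elim_inl]
      unfold vMap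
      split_ifs with h1 h2 h3 h4 h5 h6 <;>
        first
          | exact trivial
          | (exfalso; omega)
          | (refine pathGraph_adj.mpr ?_; simp only [Fin.val_mk]; omega)
    · exact key a e' i' hadj
    · exact (key b e i hadj).symm
    · -- inr inr
      obtain ⟨rfl, hii⟩ := (by exact hadj : e = e' ∧ i ≠ i')
      simp only [Sum.elim_inr]
      unfold eMap
      split_ifs with h1 h2 h3 h4 h5 h6 <;>
        first
          | exact trivial
          | (show i ≠ i'; exact hii)
          | (exfalso; refine hii ?_; simp_all)
end
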